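/- The least ε-closure relation H on control states generated by the rules (i) (q, ε, q') ∈ δ implies (q, q') ∈ H, (ii) H is reflexive and transitive, and (iii) if (q, γ₊, q') ∈ δ, (q', q'') ∈ H, and (q'', γ₋, q''') ∈ δ then (q, q''') ∈ H, coincides exactly with the balanced-path ε-reachability relation ⇝ε of the pushdown system. -/
import Mathlib


/-- Stack actions over a stack alphabet `Γ`: no change, push, or pop. -/
inductive SAct (Γ : Type) : Type
  | eps : SAct Γ
  | push : Γ → SAct Γ
  | pop : Γ → SAct Γ
  deriving DecidableEq

/-- Labeled one-step transition on configurations of a pushdown system with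
transition relation `δ`. -/
def PStep {Q Γ : Type} (δ : Q → SAct Γ → Q → Prop) :
    Q × List Γ → SAct Γ → Q × List Γ → Prop :=
  fun c g c' =>
    match g with
    | SAct.eps => δ c.1 SAct.eps c'.1 ∧ c'.2 = c.2
    | SAct.push γ => δ c.1 (SAct.push γ) c'.1 ∧ c'.2 = γ :: c.2
    | SAct.pop γ => δ c.1 (SAct.pop γ) c'.1 ∧ c.2 = γ :: c'.2

/-- Multi-step transition labeled by a string of stack actions. -/
inductive Steps {Q Γ : Type} (δ : Q → SAct Γ → Q → Prop) :
    Q × List Γ → List (SAct Γ) → Q × List Γ → Prop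
  | refl (c) : Steps δ c [] c
  | step {c g c' w c''} : PStep δ c g c' → Steps δ c' w c'' → Steps δ c (g :: w) c''

/-- Balanced (Dyck) strings of stack actions. -/
inductive DyckBalanced {Γ : Type} : List (SAct Γ) → Prop
  | nil : DyckBalanced []
  | eps {w} : DyckBalanced w → DyckBalanced (SAct.eps :: w)
  | wrap {γ w₁ w₂} : DyckBalanced w₁ → DyckBalanced w₂ →
      DyckBalanced (SAct.push γ :: w₁ ++ SAct.pop γ :: w₂)

/-- ε-reachability between control states: for every stack there is a
balanced-action path leaving the stack unchanged. -/
def EpsPath {Q Γ : Type} (δ : Q → SAct Γ → Q → Prop) (q q' : Q) : Prop :=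
  ∀ σ : List Γ, ∃ w : List (SAct Γ),
    DyckBalanced w ∧ Steps δ (q, σ) w (q', σ)


/-- The least ε-closure relation generated by the rules: ε-edges, reflexivity,
transitivity, and matched push–ε-closure–pop composition. -/
inductive EpsClo {Q Γ : Type} (δ : Q → SAct Γ → Q → Prop) : Q → Q → Prop
  | base {q q'} : δ q SAct.eps q' → EpsClo δ q q'
  | refl (q) : EpsClo δ q q
  | trans {q q' q''} : EpsClo δ q q' → EpsClo δ q' q'' → EpsClo δ q q''
  | pushpop {q q' q'' q''' γ} : δ q (SAct.push γ) q' → EpsClo δ q' q'' →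
      δ q'' (SAct.pop γ) q''' → EpsClo δ q q'''

lemma Steps.append {Q Γ : Type} {δ : Q → SAct Γ → Q → Prop} {c c' c'' w₁ w₂}
    (h₁ : Steps δ c w₁ c') (h₂ : Steps δ c' w₂ c'') : Steps δ c (w₁ ++ w₂) c'' := by
  induction h₁ with
  | refl => exact h₂
  | step hs _ ih => exact Steps.step hs (ih h₂)

lemma Steps.append_split {Q Γ : Type} {δ : Q → SAct Γ → Q → Prop} {c c'' : Q × List Γ}
    {w₁ w₂ : List (SAct Γ)} (h : Steps δ c (w₁ ++ w₂) c'') :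
    ∃ c', Steps δ c w₁ c' ∧ Steps δ c' w₂ c'' := by
  induction w₁ generalizing c with
  | nil => exact ⟨c, Steps.refl c, h⟩
  | cons g w ih =>
    cases h with
    | step hs hrest =>
      obtain ⟨c', h1, h2⟩ := ih hrest
      exact ⟨c', Steps.step hs h1, h2⟩

lemma DyckBalanced.append {Γ : Type} {w₁ w₂ : List (SAct Γ)}
    (h₁ : DyckBalanced w₁) (h₂ : DyckBalanced w₂) : DyckBalanced (w₁ ++ w₂) := by
  induction h₁ with
  | nil => exact h₂
  | eps _ ih => exact DyckBalanced.eps ih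
  | wrap ha _ _ ihb =>
    simp only [List.cons_append, List.append_assoc]
    exact DyckBalanced.wrap ha ihb

lemma Steps.cons_split {Q Γ : Type} {δ : Q → SAct Γ → Q → Prop} {c c'' : Q × List Γ}
    {g : SAct Γ} {w : List (SAct Γ)} (h : Steps δ c (g :: w) c'') :
    ∃ c', PStep δ c g c' ∧ Steps δ c' w c'' := by
  cases h with
  | step hs hrest => exact ⟨_, hs, hrest⟩

lemma balanced_steps {Q Γ : Type} {δ : Q → SAct Γ → Q → Prop} {w : List (SAct Γ)}
    (hw : DyckBalanced w) : ∀ {q q' : Q} {σ σ' : List Γ},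
    Steps δ (q, σ) w (q', σ') → σ' = σ ∧ EpsClo δ q q' := by
  induction hw with
  | nil =>
    intro q q' σ σ' h
    cases h; exact ⟨rfl, EpsClo.refl q⟩
  | eps _ ih =>
    intro q q' σ σ' h
    obtain ⟨⟨q₁, σ₁⟩, ⟨hd, hstk⟩, hrest⟩ := Steps.cons_split h
    simp only at hd hstk
    subst hstk
    obtain ⟨h1, h2⟩ := ih hrest
    exact ⟨h1, EpsClo.trans (EpsClo.base hd) h2⟩
  | @wrap γ w₁ w₂ _ _ ih₁ ih₂ =>
    intro q q' σ σ' h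
    rw [List.cons_append] at h
    obtain ⟨⟨q₁, σ₁⟩, ⟨hd, hstk⟩, hrest⟩ := Steps.cons_split h
    simp only at hd hstk
    subst hstk
    obtain ⟨⟨q₂, σ₂⟩, hA, hB⟩ := Steps.append_split hrest
    obtain ⟨hσ₂, hc₁⟩ := ih₁ hA
    cases hσ₂
    obtain ⟨⟨q₃, σ₃⟩, ⟨hd₂, hstk₂⟩, hrest₂⟩ := Steps.cons_split hB
    simp only at hd₂ hstk₂
    cases hstk₂
    obtain ⟨h1, h2⟩ := ih₂ hrest₂
    exact ⟨h1, EpsClo.trans (EpsClo.pushpop hd hc₁ hd₂) h2⟩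

/-- the least ε-closure relation generated by the rules coincides
exactly with balanced-path ε-reachability. -/
theorem epsClo_iff_epsPath {Q Γ : Type} (δ : Q → SAct Γ → Q → Prop) (q q' : Q) :
    EpsClo δ q q' ↔ EpsPath δ q q' := by
  constructor
  · intro h
    induction h with
    | @base a b hd =>
      intro σ
      exact ⟨[SAct.eps], DyckBalanced.eps DyckBalanced.nil,
        Steps.step (c' := (b, σ)) ⟨hd, rfl⟩ (Steps.refl _)⟩
    | refl =>
      intro σ
      exact ⟨[], DyckBalanced.nil, Steps.refl _⟩
    | trans _ _ ih₁ ih₂ =>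
      intro σ
      obtain ⟨w₁, hb₁, hs₁⟩ := ih₁ σ
      obtain ⟨w₂, hb₂, hs₂⟩ := ih₂ σ
      exact ⟨w₁ ++ w₂, hb₁.append hb₂, hs₁.append hs₂⟩
    | @pushpop a b c d γ hd₁ _ hd₂ ih =>
      intro σ
      obtain ⟨w, hb, hs⟩ := ih (γ :: σ)
      refine ⟨SAct.push γ :: w ++ [SAct.pop γ], DyckBalanced.wrap hb DyckBalanced.nil, ?_⟩
      exact Steps.step ⟨hd₁, rfl⟩ (hs.append (Steps.step ⟨hd₂, rfl⟩ (Steps.refl _)))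
  · intro h
    obtain ⟨w, hb, hs⟩ := h []
    exact (balanced_steps hb hs).2
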